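/- Let n and m be positive integers, let A be an invertible n×n real matrix, let D be an n×n real matrix, let b ∈ ℝⁿ, and let ε be a real number with m · |ε| · ‖A⁻¹ * D‖ < 1, where ‖·‖ is the operator norm induced by the Euclidean vector norm. For each integer α with 1 ≤ α ≤ m define x̂_α := (1/2)((A + (α·ε) • D)⁻¹ b + (A − (α·ε) • D)⁻¹ b), and for each k ≥ 0 define v_k := ((ε • (A⁻¹ * D))^{2k} * A⁻¹) b ∈ ℝⁿ. Then for every α with 1 ≤ α ≤ m, x̂_α = Σ_{k=0}^∞ (Γ)_{α,k} v_k where (Γ)_{α,k} = α^{2k}; i.e., the vector of averaged perturbation solutions equals the (infinite) Vandermonde matrix Γ applied to the sequence (v_k)_{k≥0}, with absolute convergence of each series. -/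

import Mathlib

open scoped Matrix.Norms.L2Operator

/-- Matrix-vector product, with the vector living in Euclidean space (so that vector
norms are the Euclidean ones). -/
noncomputable def mulVecE {n : ℕ} (M : Matrix (Fin n) (Fin n) ℝ)
    (v : EuclideanSpace ℝ (Fin n)) : EuclideanSpace ℝ (Fin n) :=
  (WithLp.equiv 2 (Fin n → ℝ)).symm (M.mulVec ((WithLp.equiv 2 (Fin n → ℝ)) v))

/-- The averaged perturbation solution
`x̂_α = (1/2)((A + (α ε) • D)⁻¹ b + (A - (α ε) • D)⁻¹ b)`. -/
noncomputable def xhat {n : ℕ} (A D : Matrix (Fin n) (Fin n) ℝ)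
    (b : EuclideanSpace ℝ (Fin n)) (ε α : ℝ) : EuclideanSpace ℝ (Fin n) :=
  (1 / 2 : ℝ) • (mulVecE (A + (α * ε) • D)⁻¹ b + mulVecE (A - (α * ε) • D)⁻¹ b)

lemma mulVecE_add' {n : ℕ} (P Q : Matrix (Fin n) (Fin n) ℝ) (v : EuclideanSpace ℝ (Fin n)) :
    mulVecE (P + Q) v = mulVecE P v + mulVecE Q v := by
  simp [mulVecE, Matrix.add_mulVec]

lemma mulVecE_smul' {n : ℕ} (r : ℝ) (P : Matrix (Fin n) (Fin n) ℝ) (v : EuclideanSpace ℝ (Fin n)) :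
    mulVecE (r • P) v = r • mulVecE P v := by
  simp [mulVecE, Matrix.smul_mulVec]

lemma mulVecE_neg' {n : ℕ} (P : Matrix (Fin n) (Fin n) ℝ) (v : EuclideanSpace ℝ (Fin n)) :
    mulVecE (-P) v = -(mulVecE P v) := by
  simp [mulVecE, Matrix.neg_mulVec]

/-- `N ↦ mulVecE N b` as a continuous linear map. -/
noncomputable def mulVecECLM {n : ℕ} (b : EuclideanSpace ℝ (Fin n)) :
    Matrix (Fin n) (Fin n) ℝ →L[ℝ] EuclideanSpace ℝ (Fin n) :=
  LinearMap.toContinuousLinearMap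
    { toFun := fun N => mulVecE N b
      map_add' := fun P Q => mulVecE_add' P Q b
      map_smul' := fun r P => mulVecE_smul' r P b }

@[simp] lemma mulVecECLM_apply {n : ℕ} (b : EuclideanSpace ℝ (Fin n))
    (N : Matrix (Fin n) (Fin n) ℝ) : mulVecECLM b N = mulVecE N b := rfl

lemma inv_eq_geom_series {n : ℕ} (A D : Matrix (Fin n) (Fin n) ℝ) (hA : IsUnit A) (s : ℝ)
    (h : ‖s • (A⁻¹ * D)‖ < 1) :
    (A + s • D)⁻¹ = ∑' k : ℕ, (-(s • (A⁻¹ * D))) ^ k * A⁻¹ := by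
  have hAdet : IsUnit A.det := (Matrix.isUnit_iff_isUnit_det A).mp hA
  have hAA : A * A⁻¹ = 1 := Matrix.mul_nonsing_inv A hAdet
  have hfact : A + s • D = A * (1 + s • (A⁻¹ * D)) := by
    rw [Matrix.mul_add, mul_one, Matrix.mul_smul, ← mul_assoc, hAA, one_mul]
  have hneg : ‖-(s • (A⁻¹ * D))‖ < 1 := by rwa [norm_neg]
  rw [hfact, Matrix.mul_inv_rev, Matrix.nonsing_inv_eq_ringInverse,
    show (1 : Matrix (Fin n) (Fin n) ℝ) + s • (A⁻¹ * D)
        = 1 - (-(s • (A⁻¹ * D))) by rw [sub_neg_eq_add],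
    ← geom_series_eq_inverse _ hneg]
  have hs := summable_geometric_of_norm_lt_one hneg
  have key := hs.tsum_mul_right (A⁻¹)
  exact key.symm

/-- The vector of averaged perturbation solutions equals the infinite Vandermonde
matrix `Γ` (with entries `Γ_{α,k} = α^(2k)`) applied to the sequence
`v_k = ((ε • (A⁻¹ D))^(2k) A⁻¹) b`, with absolute convergence of each series. -/
theorem xhat_eq_vandermonde_applied (n m : ℕ) (hn : 0 < n) (hm : 0 < m)
    (A D : Matrix (Fin n) (Fin n) ℝ) (hA : IsUnit A) (b : EuclideanSpace ℝ (Fin n))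
    (ε : ℝ) (hε : (m : ℝ) * |ε| * ‖A⁻¹ * D‖ < 1) :
    ∀ α : Fin m,
      Summable (fun k : ℕ =>
          ‖(((α : ℕ) + 1 : ℝ)) ^ (2 * k) •
              mulVecE ((ε • (A⁻¹ * D)) ^ (2 * k) * A⁻¹) b‖) ∧
        xhat A D b ε ((α : ℕ) + 1)
          = ∑' k : ℕ, (((α : ℕ) + 1 : ℝ)) ^ (2 * k) •
              mulVecE ((ε • (A⁻¹ * D)) ^ (2 * k) * A⁻¹) b := by
  intro α
  haveI : Nonempty (Fin n) := ⟨⟨0, hn⟩⟩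
  set M : Matrix (Fin n) (Fin n) ℝ := A⁻¹ * D with hM
  set c : ℝ := ((α : ℕ) : ℝ) + 1 with hc
  have hc0 : 0 < c := by positivity
  have hcm : c ≤ (m : ℝ) := by
    have h1 : ((α : ℕ) + 1 : ℕ) ≤ m := α.isLt
    rw [hc]; exact_mod_cast h1
  have hεM : ‖ε • M‖ = |ε| * ‖M‖ := by rw [norm_smul, Real.norm_eq_abs]
  have hr1 : c * ‖ε • M‖ < 1 := by
    rw [hεM, ← mul_assoc]
    calc c * |ε| * ‖M‖ ≤ (m : ℝ) * |ε| * ‖M‖ := by gcongr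
      _ < 1 := hε
  set t : Matrix (Fin n) (Fin n) ℝ := (c * ε) • M with ht
  have htnorm : ‖t‖ < 1 := by
    rw [ht, norm_smul, Real.norm_eq_abs, abs_mul, abs_of_pos hc0, mul_assoc, ← hεM]
    exact hr1
  have htnorm' : ‖-t‖ < 1 := by rwa [norm_neg]
  -- t^(2k) in terms of (ε • M)^(2k)
  have htpow : ∀ k : ℕ, t ^ (2 * k) = c ^ (2 * k) • (ε • M) ^ (2 * k) := by
    intro k
    rw [ht, smul_pow, smul_pow, mul_pow, mul_smul]
  -- Summability of the norms
  have hbound : ∀ k : ℕ, ‖c ^ (2 * k) • mulVecE ((ε • M) ^ (2 * k) * A⁻¹) b‖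
      ≤ ((c * ‖ε • M‖) ^ 2) ^ k * (‖A⁻¹‖ * ‖b‖) := by
    intro k
    rw [norm_smul, Real.norm_eq_abs, abs_of_pos (pow_pos hc0 _)]
    have h1 : ‖mulVecE ((ε • M) ^ (2 * k) * A⁻¹) b‖
        ≤ ‖ε • M‖ ^ (2 * k) * ‖A⁻¹‖ * ‖b‖ := by
      refine le_trans (Matrix.l2_opNorm_mulVec _ b) ?_
      gcongr
      exact le_trans (Matrix.l2_opNorm_mul _ _) (by gcongr; exact norm_pow_le _ _)
    calc c ^ (2 * k) * ‖mulVecE ((ε • M) ^ (2 * k) * A⁻¹) b‖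
        ≤ c ^ (2 * k) * (‖ε • M‖ ^ (2 * k) * ‖A⁻¹‖ * ‖b‖) := by gcongr
      _ = ((c * ‖ε • M‖) ^ 2) ^ k * (‖A⁻¹‖ * ‖b‖) := by
          rw [← pow_mul, mul_pow]; ring
  have hgeo : Summable (fun k : ℕ => ((c * ‖ε • M‖) ^ 2) ^ k * (‖A⁻¹‖ * ‖b‖)) := by
    refine Summable.mul_right _ (summable_geometric_of_lt_one (by positivity) ?_)
    exact pow_lt_one₀ (by positivity) hr1 two_ne_zero
  have hsumnorm : Summable (fun k : ℕ =>
      ‖c ^ (2 * k) • mulVecE ((ε • M) ^ (2 * k) * A⁻¹) b‖) :=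
    Summable.of_nonneg_of_le (fun _ => norm_nonneg _) hbound hgeo
  refine ⟨hsumnorm, ?_⟩
  -- geometric series expansions of the two inverses
  have h1 : ‖(c * ε) • M‖ < 1 := htnorm
  have h2 : ‖(-(c * ε)) • M‖ < 1 := by rwa [neg_smul, norm_neg]
  have e1 : (A + (c * ε) • D)⁻¹ = ∑' k : ℕ, (-t) ^ k * A⁻¹ := inv_eq_geom_series A D hA _ h1
  have e2 : (A - (c * ε) • D)⁻¹ = ∑' k : ℕ, t ^ k * A⁻¹ := by
    rw [show A - (c * ε) • D = A + (-(c * ε)) • D by rw [neg_smul, ← sub_eq_add_neg],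
      inv_eq_geom_series A D hA _ h2]
    congr 1
    funext k
    rw [neg_smul, neg_neg]
  -- summability of the matrix series
  have hsA : Summable (fun k : ℕ => t ^ k * A⁻¹) :=
    (summable_geometric_of_norm_lt_one htnorm).mul_right _
  have hsA' : Summable (fun k : ℕ => (-t) ^ k * A⁻¹) :=
    (summable_geometric_of_norm_lt_one htnorm').mul_right _
  have hvs : Summable (fun k : ℕ => mulVecE (t ^ k * A⁻¹) b) :=
    hsA.map (mulVecECLM b).toLinearMap.toAddMonoidHom (mulVecECLM b).continuous
  have hvs' : Summable (fun k : ℕ => mulVecE ((-t) ^ k * A⁻¹) b) :=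
    hsA'.map (mulVecECLM b).toLinearMap.toAddMonoidHom (mulVecECLM b).continuous
  have hmap : ∀ {f : ℕ → Matrix (Fin n) (Fin n) ℝ}, Summable f →
      mulVecE (∑' k, f k) b = ∑' k, mulVecE (f k) b := by
    intro f hf
    simpa using (mulVecECLM b).map_tsum hf
  calc xhat A D b ε c
      = (1 / 2 : ℝ) • ((∑' k : ℕ, mulVecE ((-t) ^ k * A⁻¹) b)
          + (∑' k : ℕ, mulVecE (t ^ k * A⁻¹) b)) := by
        rw [xhat, e1, e2, hmap hsA', hmap hsA]
    _ = ∑' k : ℕ, (1 / 2 : ℝ) • (mulVecE ((-t) ^ k * A⁻¹) b + mulVecE (t ^ k * A⁻¹) b) := by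
        rw [← Summable.tsum_add hvs' hvs, Summable.tsum_const_smul _ (hvs'.add hvs)]
    _ = ∑' j : ℕ, (1 / 2 : ℝ) •
          (mulVecE ((-t) ^ (2 * j) * A⁻¹) b + mulVecE (t ^ (2 * j) * A⁻¹) b) := by
        have hinj : Function.Injective (fun j : ℕ => 2 * j) := fun a b h =>
          Nat.eq_of_mul_eq_mul_left (by norm_num) h
        refine (Function.Injective.tsum_eq (g := fun j : ℕ => 2 * j)
          (f := fun k : ℕ => (1 / 2 : ℝ) •
            (mulVecE ((-t) ^ k * A⁻¹) b + mulVecE (t ^ k * A⁻¹) b)) hinj ?_).symm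
        intro k hk
        rw [Function.mem_support] at hk
        by_contra hk2
        have hodd : Odd k := by
          rcases Nat.even_or_odd k with he | ho
          · obtain ⟨r, hr⟩ := he
            exact absurd ⟨r, (by omega : 2 * r = k)⟩ hk2
          · exact ho
        apply hk
        rw [hodd.neg_pow, neg_mul, mulVecE_neg', neg_add_cancel, smul_zero]
    _ = ∑' k : ℕ, c ^ (2 * k) • mulVecE ((ε • M) ^ (2 * k) * A⁻¹) b := by
        congr 1
        funext j
        rw [(even_two_mul j).neg_pow, htpow, smul_mul_assoc, mulVecE_smul',
          ← two_smul ℝ, smul_smul, smul_smul]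
        norm_num
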